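/- The 4-cycle C_4 is a unit-max-tolerance graph (UMTG) but is not an interval graph. -/

import Mathlib

variable {V : Type*}

/-- A max-tolerance representation: each vertex `u` gets an interval `[a u, b u]` and a
positive tolerance `t u`, and distinct `u, v` are adjacent iff the length of
`[a u, b u] ∩ [a v, b v]` (zero if empty) is at least `max (t u) (t v)`. -/
def IsMaxTolRep (G : SimpleGraph V) (a b t : V → ℝ) : Prop :=
  (∀ u, a u ≤ b u) ∧ (∀ u, 0 < t u) ∧
    ∀ u v : V, u ≠ v →
      (G.Adj u v ↔ max (t u) (t v) ≤ max (min (b u) (b v) - max (a u) (a v)) 0)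

/-- A unit-max-tolerance graph: a max-tolerance representation in which all intervals
have the same length. -/
def IsUMTG (G : SimpleGraph V) : Prop :=
  ∃ a b t : V → ℝ, IsMaxTolRep G a b t ∧ ∀ u v : V, b u - a u = b v - a v

/-- The cycle `C_n` on vertices `0, …, n-1`, with edges exactly between cyclically
consecutive vertices. -/
def cycleG (n : ℕ) : SimpleGraph (Fin n) where
  Adj i j := i ≠ j ∧ (((i : ℕ) + 1) % n = (j : ℕ) ∨ ((j : ℕ) + 1) % n = (i : ℕ))
  symm := ⟨fun i j h => ⟨h.1.symm, h.2.symm⟩⟩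
  loopless := ⟨fun i h => h.1 rfl⟩

/-- An interval graph: each vertex gets a closed real interval, and distinct vertices
are adjacent iff their intervals intersect. -/
def IsIntervalGraph (G : SimpleGraph V) : Prop :=
  ∃ a b : V → ℝ, (∀ u, a u ≤ b u) ∧
    ∀ u v : V, u ≠ v →
      (G.Adj u v ↔ (Set.Icc (a u) (b u) ∩ Set.Icc (a v) (b v)).Nonempty)

/-- The 4-cycle is a unit-max-tolerance graph but not an interval graph. -/
theorem c4_umtg_not_interval :
    IsUMTG (cycleG 4) ∧ ¬ IsIntervalGraph (cycleG 4) := by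
  constructor
  · refine ⟨![0,-3,-6,3], ![10,7,4,13], ![5,5,1,1], ⟨?_, ?_, ?_⟩, ?_⟩
    · intro u; fin_cases u <;> norm_num
    · intro u; fin_cases u <;> norm_num
    · intro u v huv
      fin_cases u <;> fin_cases v <;>
        simp_all [cycleG] <;> norm_num <;> decide
    · intro u v; fin_cases u <;> fin_cases v <;> norm_num
  · rintro ⟨a, b, hab, h⟩
    have adj01 : (cycleG 4).Adj 0 1 := ⟨by decide, Or.inl rfl⟩
    have adj12 : (cycleG 4).Adj 1 2 := ⟨by decide, Or.inl rfl⟩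
    have adj23 : (cycleG 4).Adj 2 3 := ⟨by decide, Or.inl rfl⟩
    have adj30 : (cycleG 4).Adj 3 0 := ⟨by decide, Or.inl rfl⟩
    have n02 : ¬ (cycleG 4).Adj 0 2 := fun hadj => by rcases hadj.2 with h | h <;> exact absurd h (by decide)
    have n13 : ¬ (cycleG 4).Adj 1 3 := fun hadj => by rcases hadj.2 with h | h <;> exact absurd h (by decide)
    obtain ⟨x, hx⟩ := (h 0 1 (by decide)).mp adj01
    obtain ⟨y, hy⟩ := (h 1 2 (by decide)).mp adj12
    obtain ⟨z, hz⟩ := (h 2 3 (by decide)).mp adj23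
    obtain ⟨w, hw⟩ := (h 3 0 (by decide)).mp adj30
    have d02 : b 0 < a 2 ∨ b 2 < a 0 := by
      by_contra hc
      push_neg at hc
      exact n02 ((h 0 2 (by decide)).mpr
        ⟨max (a 0) (a 2), ⟨le_max_left _ _, max_le (hab 0) hc.1⟩,
          ⟨le_max_right _ _, max_le hc.2 (hab 2)⟩⟩)
    have d13 : b 1 < a 3 ∨ b 3 < a 1 := by
      by_contra hc
      push_neg at hc
      exact n13 ((h 1 3 (by decide)).mpr
        ⟨max (a 1) (a 3), ⟨le_max_left _ _, max_le (hab 1) hc.1⟩,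
          ⟨le_max_right _ _, max_le hc.2 (hab 3)⟩⟩)
    obtain ⟨⟨hx1,hx2⟩,⟨hx3,hx4⟩⟩ := hx
    obtain ⟨⟨hy1,hy2⟩,⟨hy3,hy4⟩⟩ := hy
    obtain ⟨⟨hz1,hz2⟩,⟨hz3,hz4⟩⟩ := hz
    obtain ⟨⟨hw1,hw2⟩,⟨hw3,hw4⟩⟩ := hw
    rcases d02 with h1 | h1 <;> rcases d13 with h2 | h2 <;> linarith
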